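/- arXiv:2307.05992 — 5 statements merged into one kernel-verified Lean document; each statement's English description precedes it below -/
import Mathlib

section
/- Let A, L, δ_L, c be real numbers with A > 0, L > 0, c > 0 and -L < δ_L < 0. Assume the three conditions: (1) 3L + δ_L < A; (2) -L ≤ δ_L < -L²/A; (3) A/(A - 2L - δ_L) < c < A/L. If δ_A is a real number with A + δ_A ≠ 0 satisfying the withdrawal equation δ_A - c(L + δ_L)²/(A + δ_A) + cL²/A = (1 - c)·δ_L, then either δ_A > 0, or δ_A < 0 and |δ_A| > A. -/
/-- Theorem 1 (Robbed withdrawal): under the three conditions, any solution `δA` of the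
withdrawal equation is either positive, or negative with `|δA| > A`. -/
theorem robbed_withdrawal (A L δL c δA : ℝ)
    (hA : 0 < A) (hL : 0 < L) (hc : 0 < c)
    (hδL_lower : -L < δL) (hδL_neg : δL < 0)
    (cond1 : 3 * L + δL < A)
    (cond2 : -L ≤ δL ∧ δL < -L ^ 2 / A)
    (cond3 : A / (A - 2 * L - δL) < c ∧ c < A / L)
    (hne : A + δA ≠ 0)
    (heq : δA - c * (L + δL) ^ 2 / (A + δA) + c * L ^ 2 / A = (1 - c) * δL) :
    δA > 0 ∨ (δA < 0 ∧ |δA| > A) := by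
  have hD : 0 < A - 2 * L - δL := by linarith
  have hcD : A < c * (A - 2 * L - δL) := (div_lt_iff₀ hD).mp cond3.1
  have hAne : A ≠ 0 := ne_of_gt hA
  have hLδ : 0 < L + δL := by linarith
  field_simp at heq
  by_cases hpos : δA > 0
  · exact Or.inl hpos
  · push_neg at hpos
    have hlt : δA < -A := by
      by_contra hge
      push_neg at hge
      set q : ℝ := δL * (c * (A - 2 * L - δL) - A) with hqdef
      have hq : q < 0 := mul_neg_of_neg_of_pos hδL_neg (by linarith)
      have hP : 0 < c * (L + δL) ^ 2 := by positivity
      have h1 : δA * (δA + A) ≤ 0 := mul_nonpos_of_nonpos_of_nonneg hpos (by linarith)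
      have key : (δA + A) * q + δA * (c * (L + δL) ^ 2) < 0 := by
        rcases lt_or_eq_of_le hpos with h | h
        · have : (δA + A) * q ≤ 0 := mul_nonpos_of_nonneg_of_nonpos (by linarith) (le_of_lt hq)
          nlinarith [mul_pos (neg_pos.mpr h) hP]
        · subst h
          nlinarith [mul_pos hA (neg_pos.mpr hq)]
      nlinarith [key, h1]
    refine Or.inr ⟨by linarith, ?_⟩
    rw [abs_of_neg (by linarith)]
    linarith
end

section
/- Let A, L, δ_L, c be real numbers with A > 0, L > 0, -L < δ_L < 0, satisfying: (1) 3L + δ_L < A; (2) δ_L < -L²/A; (3) A/(A - 2L - δ_L) < c < A/L. Then the quantity b = (δ_L + L²/A)·c + A - δ_L satisfies 2L < b < 2A. -/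
/-- The Claim inside the proof of Theorem 1: `2L < b < 2A`. -/
theorem claim_b_bounds (A L δL c : ℝ)
    (hA : 0 < A) (hL : 0 < L)
    (hδL_lower : -L < δL) (hδL_neg : δL < 0)
    (cond1 : 3 * L + δL < A)
    (cond2 : δL < -L ^ 2 / A)
    (cond3 : A / (A - 2 * L - δL) < c ∧ c < A / L) :
    2 * L < (δL + L ^ 2 / A) * c + A - δL ∧ (δL + L ^ 2 / A) * c + A - δL < 2 * A := by
  obtain ⟨hc1, hc2⟩ := cond3
  have hden : 0 < A - 2 * L - δL := by linarith
  -- clear denominators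
  have hk : δL * A + L ^ 2 < 0 := by
    have h := (lt_div_iff₀ hA).mp cond2
    linarith
  have hc1' : A < c * (A - 2 * L - δL) := (div_lt_iff₀ hden).mp hc1
  have hc2' : c * L < A := (lt_div_iff₀ hL).mp hc2
  have hb : (δL + L ^ 2 / A) * c + A - δL
      = ((δL * A + L ^ 2) * c + (A - δL) * A) / A := by
    field_simp; ring
  constructor
  · rw [hb, lt_div_iff₀ hA]
    nlinarith [mul_pos (show (0:ℝ) < A - L by linarith) (show (0:ℝ) < δL + L by linarith),
      mul_neg_of_neg_of_pos hk (show (0:ℝ) < A - L by linarith)]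
  · rw [hb, div_lt_iff₀ hA]
    nlinarith [mul_pos hden hA, mul_lt_mul_of_pos_right hc1' hA,
      mul_pos (show (0:ℝ) < A - L - δL by linarith) (show (0:ℝ) < A - L - δL by linarith)]
end

section
/- Let A, L, δ_L, c be real numbers with A > 0, L > 0, δ_L < 0, A - 2L - δ_L > 0, and suppose b = (δ_L + L²/A)·c + A - δ_L satisfies b > 0. Set Δ = b² - 4·((A - 2L - δ_L)·c - A)·δ_L. Then the root δ_A⁺ = (-b + √Δ)/2 is strictly positive if and only if c > A/(A - 2L - δ_L). -/
/-- The larger root `δA⁺ = (-b + √Δ)/2` is positive iff `c > A/(A - 2L - δL)`. -/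
theorem plus_root_pos_iff (A L δL c : ℝ)
    (hA : 0 < A) (hL : 0 < L) (hδL : δL < 0)
    (hden : A - 2 * L - δL > 0)
    (hb : (δL + L ^ 2 / A) * c + A - δL > 0) :
    (-((δL + L ^ 2 / A) * c + A - δL)
        + Real.sqrt (((δL + L ^ 2 / A) * c + A - δL) ^ 2
            - 4 * (((A - 2 * L - δL) * c - A) * δL))) / 2 > 0
      ↔ c > A / (A - 2 * L - δL) := by
  set b := (δL + L ^ 2 / A) * c + A - δL with hbdef
  set q := (A - 2 * L - δL) * c - A with hqdef
  clear_value b q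
  have key : (-b + Real.sqrt (b ^ 2 - 4 * (q * δL))) / 2 > 0 ↔ q > 0 := by
    constructor
    · intro h
      by_contra hq
      push_neg at hq
      have hqδ : 0 ≤ q * δL := by nlinarith
      have h1 : Real.sqrt (b ^ 2 - 4 * (q * δL)) ≤ Real.sqrt (b ^ 2) :=
        Real.sqrt_le_sqrt (by linarith)
      rw [Real.sqrt_sq hb.le] at h1
      linarith
    · intro hq
      have hqδ : q * δL < 0 := mul_neg_of_pos_of_neg hq hδL
      have h1 : Real.sqrt (b ^ 2) < Real.sqrt (b ^ 2 - 4 * (q * δL)) :=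
        Real.sqrt_lt_sqrt (sq_nonneg b) (by linarith)
      rw [Real.sqrt_sq hb.le] at h1
      linarith
  rw [key, gt_iff_lt, gt_iff_lt, div_lt_iff₀ hden, hqdef]
  constructor <;> intro h <;> nlinarith
end

section
/- Let A, L, δ_L, c be real numbers with A > 0, L > 0, c > 0, -L < δ_L < 0, satisfying: (1) 3L + δ_L < A; (2) δ_L < -L²/A; (3) A/(A - 2L - δ_L) < c < A/L. Set b = (δ_L + L²/A)·c + A - δ_L and Δ = b² - 4·((A - 2L - δ_L)·c - A)·δ_L. Then the root δ_A⁻ = (-b - √Δ)/2 satisfies δ_A⁻ < 0 and |δ_A⁻| > A. -/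
lemma lt_sqrt_of_sq_lt {x y : ℝ} (h : x ^ 2 < y) : x < Real.sqrt y := by
  rcases le_or_gt x 0 with hx | hx
  · have hy : 0 < y := lt_of_le_of_lt (sq_nonneg x) h
    exact hx.trans_lt (Real.sqrt_pos.2 hy)
  · exact (Real.lt_sqrt hx.le).2 h

/-- The smaller root `δA⁻ = (-b - √Δ)/2` is negative and exceeds `A` in absolute value. -/
theorem minus_root_bad_debt (A L δL c : ℝ)
    (hA : 0 < A) (hL : 0 < L) (hc : 0 < c)
    (hδL_lower : -L < δL) (hδL_neg : δL < 0)
    (cond1 : 3 * L + δL < A)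
    (cond2 : δL < -L ^ 2 / A)
    (cond3 : A / (A - 2 * L - δL) < c ∧ c < A / L) :
    (-((δL + L ^ 2 / A) * c + A - δL)
        - Real.sqrt (((δL + L ^ 2 / A) * c + A - δL) ^ 2
            - 4 * (((A - 2 * L - δL) * c - A) * δL))) / 2 < 0 ∧
      |(-((δL + L ^ 2 / A) * c + A - δL)
          - Real.sqrt (((δL + L ^ 2 / A) * c + A - δL) ^ 2
              - 4 * (((A - 2 * L - δL) * c - A) * δL))) / 2| > A := by
  set b : ℝ := (δL + L ^ 2 / A) * c + A - δL with hb
  set Δ : ℝ := b ^ 2 - 4 * (((A - 2 * L - δL) * c - A) * δL) with hΔ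
  clear_value b Δ
  have hden : 0 < A - 2 * L - δL := by nlinarith
  have hm : A < c * (A - 2 * L - δL) := (div_lt_iff₀ hden).1 cond3.1
  have hmpos : 0 < (A - 2 * L - δL) * c - A := by nlinarith
  have h1 : (-b) ^ 2 < Δ := by
    rw [hΔ]; nlinarith [sq_nonneg b]
  have hs1 : -b < Real.sqrt Δ := lt_sqrt_of_sq_lt h1
  have hneg : (-b - Real.sqrt Δ) / 2 < 0 := by linarith
  have hLA : A * (L ^ 2 / A) = L ^ 2 := by field_simp
  have h2 : (2 * A - b) ^ 2 < Δ := by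
    have key : A ^ 2 - A * b + ((A - 2 * L - δL) * c - A) * δL = -(c * (L + δL) ^ 2) := by
      rw [hb]; field_simp; ring
    have hLδ : 0 < L + δL := by linarith
    have hpos : 0 < c * (L + δL) ^ 2 := by positivity
    rw [hΔ]; nlinarith
  have hs2 : 2 * A - b < Real.sqrt Δ := lt_sqrt_of_sq_lt h2
  refine ⟨hneg, ?_⟩
  rw [abs_of_neg hneg]
  linarith
end

section
/- Let A, L, δ_L, c be real numbers with A > 0, set b = (δ_L + L²/A)·c + A - δ_L and Δ = b² - 4·((A - 2L - δ_L)·c - A)·δ_L, and assume Δ ≥ 0. If δ = (-b + √Δ)/2 or δ = (-b - √Δ)/2, and A + δ ≠ 0, then δ satisfies δ - c(L + δ_L)²/(A + δ) + cL²/A = (1 - c)·δ_L. -/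
/-- Both `(-b ± √Δ)/2` solve the withdrawal equation when `Δ ≥ 0` and `A + δ ≠ 0`. -/
theorem roots_solve_withdrawal (A L δL c δ : ℝ) (hA : 0 < A)
    (hΔ : ((δL + L ^ 2 / A) * c + A - δL) ^ 2
        - 4 * (((A - 2 * L - δL) * c - A) * δL) ≥ 0)
    (hδ : δ = (-((δL + L ^ 2 / A) * c + A - δL)
          + Real.sqrt (((δL + L ^ 2 / A) * c + A - δL) ^ 2
              - 4 * (((A - 2 * L - δL) * c - A) * δL))) / 2
      ∨ δ = (-((δL + L ^ 2 / A) * c + A - δL)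
          - Real.sqrt (((δL + L ^ 2 / A) * c + A - δL) ^ 2
              - 4 * (((A - 2 * L - δL) * c - A) * δL))) / 2)
    (hne : A + δ ≠ 0) :
    δ - c * (L + δL) ^ 2 / (A + δ) + c * L ^ 2 / A = (1 - c) * δL := by
  have hA' : A ≠ 0 := ne_of_gt hA
  have hs : Real.sqrt (((δL + L ^ 2 / A) * c + A - δL) ^ 2
              - 4 * (((A - 2 * L - δL) * c - A) * δL)) ^ 2
      = ((δL + L ^ 2 / A) * c + A - δL) ^ 2
        - 4 * (((A - 2 * L - δL) * c - A) * δL) := Real.sq_sqrt hΔ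
  have key : δ ^ 2 + ((δL + L ^ 2 / A) * c + A - δL) * δ
      + ((A - 2 * L - δL) * c - A) * δL = 0 := by
    rcases hδ with h | h <;> subst h <;> nlinarith [hs]
  field_simp
  field_simp at key
  nlinarith [key, sq_nonneg δ]
end
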